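/- Let a, b > 0 and k₁, k₂, c ∈ ℝ, and let f : ℝ⁴ → ℝ⁴ be the discrete Ziegler map. A point p = (x, y, z, ω) ∈ ℝ⁴ is a fixed point of f (i.e. f(p) = p) if and only if y = x, z = ω = -((k₁ + a)/a)·x, and a·c·sin x = (a·b + (a+b)·k₁ + k₂·(k₁ + a))·x. -/

import Mathlib

/-- The discrete Ziegler map (with the non-Hamiltonian symmetry Δ = 0),
with real parameters `a b k₁ k₂ c`, acting on `(x, y, z, ω) ∈ ℝ⁴`. -/
noncomputable def zieglerMap (a b k₁ k₂ c : ℝ) : ℝ × ℝ × ℝ × ℝ → ℝ × ℝ × ℝ × ℝ :=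
  fun p =>
    (p.2.1,
     (1 / (a * b)) * (-(a + b) * k₁ * p.1 + a * k₂ * p.2.2.1 + a * c * Real.sin p.1),
     p.2.2.2,
     (1 / (a * b)) * (a * k₁ * p.1 - a * k₂ * p.2.2.1 - a * c * Real.sin p.1))

theorem fixed_points_characterization
    (a b k₁ k₂ c : ℝ) (ha : 0 < a) (hb : 0 < b) (x y z ω : ℝ) :
    zieglerMap a b k₁ k₂ c (x, y, z, ω) = (x, y, z, ω) ↔
      (y = x ∧ z = -((k₁ + a) / a) * x ∧ ω = -((k₁ + a) / a) * x ∧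
        a * c * Real.sin x = (a * b + (a + b) * k₁ + k₂ * (k₁ + a)) * x) := by
  have ha' : a ≠ 0 := ha.ne'
  have hb' : b ≠ 0 := hb.ne'
  simp only [zieglerMap, Prod.mk.injEq]
  constructor
  · rintro ⟨h1, h2, h3, h4⟩
    subst h1 h3
    field_simp at h2 h4
    have hs' : ω * a * b = (-a - k₁) * y * b := by linear_combination -h2 - a * h4
    have hs : ω * a = (-a - k₁) * y := mul_right_cancel₀ hb' hs'
    refine ⟨rfl, ?_, ?_, ?_⟩
    · field_simp
      linear_combination hs
    · field_simp
      linear_combination hs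
    · linear_combination -a * h4 - (k₂ + b) * hs
  · rintro ⟨h1, h2, h3, h4⟩
    subst h1 h2 h3
    refine ⟨rfl, ?_, rfl, ?_⟩ <;> field_simp
    · linear_combination h4
    · linear_combination -h4
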